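/- Let x ∈ Mₙ(ℂ) be regular, i.e., its minimal polynomial has degree n. Then {y ∈ Mₙ(ℂ) : tr(x^k · y) = 0 for all 0 ≤ k ≤ n − 1} = {g·x − x·g : g ∈ Mₙ(ℂ)}; that is, the common kernel of the differentials of the conjugation-invariant trace functions at x is exactly the tangent space to the conjugation orbit of x. -/

import Mathlib

open Polynomial

lemma exists_cyclic {n : ℕ} (hn : 1 ≤ n) {V : Type*} [AddCommGroup V] [Module ℂ V]
    [FiniteDimensional ℂ V] (f : Module.End ℂ V) (hdeg : (minpoly ℂ f).natDegree = n) :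
    ∃ v : V, ∀ p : ℂ[X], p ≠ 0 → p.natDegree < n → (aeval f) p v ≠ 0 := by
  by_contra hcon
  push_neg at hcon
  set m := minpoly ℂ f with hm
  have hm0 : m ≠ 0 := by
    intro h; rw [h, natDegree_zero] at hdeg; omega
  set S : ℂ → Submodule ℂ V := fun l => LinearMap.ker (aeval f (m /ₘ (X - C l))) with hS
  have hcover : ∀ v : V, ∃ l ∈ m.roots.toFinset, v ∈ S l := by
    intro v
    obtain ⟨p, hp0, hpdeg, hpv⟩ := hcon v
    set d := EuclideanDomain.gcd p m with hd
    have hd0 : d ≠ 0 := fun h => hp0 (EuclideanDomain.gcd_eq_zero_iff.mp h).1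
    have hdv : (aeval f) d v = 0 := by
      rw [hd, EuclideanDomain.gcd_eq_gcd_ab p m]
      rw [mul_comm p _, mul_comm m _]
      simp only [map_add, map_mul, LinearMap.add_apply, Module.End.mul_apply, hpv,
        map_zero, minpoly.aeval, LinearMap.zero_apply, add_zero, LinearMap.map_zero]
      rw [show (aeval f) m = 0 from minpoly.aeval ℂ f]
      simp
    obtain ⟨e, he⟩ := EuclideanDomain.gcd_dvd_right p m
    have he0 : e ≠ 0 := fun h => hm0 (by rw [he, h, mul_zero])
    have hdd : d.natDegree < n :=
      lt_of_le_of_lt (Polynomial.natDegree_le_of_dvd (EuclideanDomain.gcd_dvd_left p m) hp0) hpdeg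
    have hedeg : 1 ≤ e.natDegree := by
      have := Polynomial.natDegree_mul hd0 he0
      rw [← he, hdeg] at this
      omega
    obtain ⟨l, hl⟩ := Complex.exists_root (natDegree_pos_iff_degree_pos.mp (by omega) : 0 < e.degree)
    have hlm : m.IsRoot l := by
      rw [he, IsRoot, eval_mul, hl.eq_zero, mul_zero]
    refine ⟨l, Multiset.mem_toFinset.mpr (mem_roots'.mpr ⟨hm0, hlm⟩), ?_⟩
    obtain ⟨e', he'⟩ := (dvd_iff_isRoot.mpr hl : (X - C l) ∣ e)
    have hq : m /ₘ (X - C l) = d * e' := by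
      apply mul_left_cancel₀ (X_sub_C_ne_zero l)
      rw [mul_divByMonic_eq_iff_isRoot.mpr hlm, he, he']
      ring
    rw [hS]
    simp only [LinearMap.mem_ker]
    rw [hq, mul_comm d e', map_mul]
    rw [Module.End.mul_apply, hdv, map_zero]
  have hunion : ⋃ (l : m.roots.toFinset), ((S l : Submodule ℂ V) : Set V) = Set.univ := by
    rw [Set.eq_univ_iff_forall]
    intro v
    obtain ⟨l, hl, hv⟩ := hcover v
    exact Set.mem_iUnion.mpr ⟨⟨l, hl⟩, hv⟩
  obtain ⟨⟨l, hl⟩, htop⟩ := Subspace.exists_eq_top_of_iUnion_eq_univ hunion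
  have hlm : m.IsRoot l := (mem_roots'.mp (Multiset.mem_toFinset.mp hl)).2
  have hq0 : m /ₘ (X - C l) ≠ 0 := by
    intro h
    have := mul_divByMonic_eq_iff_isRoot.mpr hlm
    rw [h, mul_zero] at this; exact hm0 this.symm
  have haeval : (aeval f) (m /ₘ (X - C l)) = 0 := LinearMap.ker_eq_top.mp htop
  have hdm : (m /ₘ (X - C l)).degree < m.degree := by
    conv_rhs => rw [← mul_divByMonic_eq_iff_isRoot.mpr hlm]
    rw [degree_mul, degree_X_sub_C]
    rw [degree_eq_natDegree hq0]
    exact_mod_cast by omega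
  exact absurd (minpoly.degree_le_of_ne_zero ℂ f hq0 haeval) (not_le.mpr hdm)

lemma linind_of_cyclic {n : ℕ} {V : Type*} [AddCommGroup V] [Module ℂ V]
    (f : Module.End ℂ V) (v : V)
    (hv : ∀ p : ℂ[X], p ≠ 0 → p.natDegree < n → (aeval f) p v ≠ 0) :
    LinearIndependent ℂ (fun i : Fin n => (f ^ (i : ℕ)) v) := by
  refine Fintype.linearIndependent_iff.mpr fun g hg i => ?_
  set p : ℂ[X] := ∑ i : Fin n, C (g i) * X ^ (i : ℕ) with hp
  have hpv : (aeval f) p v = 0 := by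
    rw [hp, map_sum, LinearMap.coe_sum, Finset.sum_apply]
    simpa [Algebra.smul_def] using hg
  have hp0 : p = 0 := by
    by_contra h
    exact hv p h (natDegree_lt_iff_degree_lt h |>.mpr (by exact_mod_cast degree_sum_fin_lt g)) hpv
  have : p.coeff i = g i := by
    rw [hp, finset_sum_coeff]
    simp [coeff_C_mul, coeff_X_pow, Fin.val_eq_val]
  rw [hp0] at this
  simpa using this.symm

open Matrix in
lemma trace_nondegen {n : ℕ} (a : Matrix (Fin n) (Fin n) ℂ)
    (h : ∀ b : Matrix (Fin n) (Fin n) ℂ, Matrix.trace (a * b) = 0) : a = 0 := by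
  ext i j
  have := h (Matrix.single j i 1)
  rw [Matrix.trace] at this
  simp only [diag_apply, Matrix.mul_apply, Matrix.single, of_apply] at this
  simpa [ite_and, Finset.sum_ite_eq, Finset.sum_ite_eq'] using this

open Matrix in
lemma L_surjective {n : ℕ} (x : Matrix (Fin n) (Fin n) ℂ)
    (hreg : (minpoly ℂ x).natDegree = n) :
    Function.Surjective (LinearMap.pi fun k : Fin n =>
      (Matrix.traceLinearMap (Fin n) ℂ ℂ) ∘ₗ (LinearMap.mulLeft ℂ (x ^ (k : ℕ)))) := by
  set L := LinearMap.pi fun k : Fin n =>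
      (Matrix.traceLinearMap (Fin n) ℂ ℂ) ∘ₗ (LinearMap.mulLeft ℂ (x ^ (k : ℕ))) with hL
  rw [← LinearMap.dualMap_injective_iff, ← LinearMap.ker_eq_bot, LinearMap.ker_eq_bot']
  intro φ hφ
  set c : Fin n → ℂ := fun k => φ (Pi.single k 1) with hc
  have hpow : LinearIndependent ℂ fun i : Fin n => x ^ (i : ℕ) := by
    have := linearIndependent_pow (K := ℂ) x
    rw [hreg] at this
    exact this
  have key : ∀ y, Matrix.trace ((∑ k : Fin n, c k • x ^ (k : ℕ)) * y) = 0 := by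
    intro y
    have h1 : φ (L y) = 0 := by
      have := congrArg (fun ψ => ψ y) hφ
      simpa [LinearMap.dualMap_apply] using this
    rw [LinearMap.pi_apply_eq_sum_univ φ (L y)] at h1
    rw [Finset.sum_mul, Matrix.trace_sum]
    rw [show (0:ℂ) = ∑ i : Fin n, (L y) i • φ fun j => if i = j then 1 else 0 from h1.symm]
    refine Finset.sum_congr rfl fun k _ => ?_
    have : (fun j => if k = j then (1:ℂ) else 0) = Pi.single k 1 := by
      ext j; simp [Pi.single_apply, eq_comm]
    rw [this, smul_mul_assoc, Matrix.trace_smul]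
    simp [hL, hc, LinearMap.mulLeft_apply, smul_eq_mul, mul_comm]
  have ha : (∑ k : Fin n, c k • x ^ (k : ℕ)) = 0 := trace_nondegen _ key
  have hc0 : ∀ k, c k = 0 := Fintype.linearIndependent_iff.mp hpow c ha
  refine Module.Basis.ext (Pi.basisFun ℂ (Fin n)) fun i => ?_
  simpa using hc0 i

/-- For a regular (non-derogatory) matrix `x ∈ Mₙ(ℂ)` (minimal polynomial of degree `n`),
the common kernel of the trace functionals `y ↦ tr(xᵏ y)`, `0 ≤ k ≤ n - 1`, equals the
tangent space `{g x - x g : g ∈ Mₙ(ℂ)}` to the conjugation orbit of `x`. -/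
theorem stmt_9 (n : ℕ) (hn : 1 ≤ n) (x : Matrix (Fin n) (Fin n) ℂ)
    (hreg : (minpoly ℂ x).natDegree = n) :
    {y : Matrix (Fin n) (Fin n) ℂ | ∀ k : ℕ, k ≤ n - 1 → Matrix.trace (x ^ k * y) = 0} =
      {y : Matrix (Fin n) (Fin n) ℂ |
        ∃ g : Matrix (Fin n) (Fin n) ℂ, y = g * x - x * g} := by
  classical
  haveI : Nonempty (Fin n) := ⟨⟨0, hn⟩⟩
  set L : Matrix (Fin n) (Fin n) ℂ →ₗ[ℂ] (Fin n → ℂ) := LinearMap.pi fun k : Fin n =>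
      (Matrix.traceLinearMap (Fin n) ℂ ℂ) ∘ₗ (LinearMap.mulLeft ℂ (x ^ (k : ℕ))) with hLdef
  set ad : Matrix (Fin n) (Fin n) ℂ →ₗ[ℂ] Matrix (Fin n) (Fin n) ℂ :=
    LinearMap.mulRight ℂ x - LinearMap.mulLeft ℂ x with had
  have hfinM : Module.finrank ℂ (Matrix (Fin n) (Fin n) ℂ) = n * n := by
    simp [Module.finrank_matrix]
  have hfinW : Module.finrank ℂ (Fin n → ℂ) = n := by simp
  -- range ad ≤ ker L
  have hle : LinearMap.range ad ≤ LinearMap.ker L := by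
    rintro _ ⟨g, rfl⟩
    rw [LinearMap.mem_ker]
    funext k
    have h0 : ad g = g * x - x * g := by
      simp [had, LinearMap.mulRight_apply, LinearMap.mulLeft_apply]
    rw [hLdef]
    simp only [LinearMap.pi_apply, LinearMap.comp_apply, LinearMap.mulLeft_apply, h0,
      Matrix.traceLinearMap, LinearMap.coe_mk, AddHom.coe_mk, Pi.zero_apply]
    rw [mul_sub, Matrix.trace_sub, ← mul_assoc (x ^ (k:ℕ)) g x,
      Matrix.trace_mul_comm (x ^ (k:ℕ) * g) x, ← mul_assoc, ← mul_assoc,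
      ← pow_succ', ← pow_succ, sub_self]
  -- finrank of ker L
  have hkerL : Module.finrank ℂ (LinearMap.ker L) = n * n - n := by
    have hsurj := L_surjective x hreg
    have h1 := LinearMap.finrank_range_add_finrank_ker L
    rw [LinearMap.range_eq_top.mpr hsurj] at h1
    rw [finrank_top, hfinW, hfinM] at h1
    omega
  -- cyclic vector and centralizer bound
  set f : Module.End ℂ (Fin n → ℂ) := Matrix.toLin' x with hf
  have hminf : (minpoly ℂ f).natDegree = n := by rw [hf, Matrix.minpoly_toLin']; exact hreg
  obtain ⟨v, hv⟩ := exists_cyclic hn f hminf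
  have hli := linind_of_cyclic f v hv
  have hcard : Fintype.card (Fin n) = Module.finrank ℂ (Fin n → ℂ) := by simp
  set b := basisOfLinearIndependentOfCardEqFinrank hli hcard with hb
  set E : LinearMap.ker ad →ₗ[ℂ] (Fin n → ℂ) :=
    (LinearMap.applyₗ v) ∘ₗ ((Matrix.toLin' (m := Fin n) (n := Fin n)
      (R := ℂ)).toLinearMap.comp (Submodule.subtype _)) with hE
  have hEinj : Function.Injective E := by
    rw [← LinearMap.ker_eq_bot, LinearMap.ker_eq_bot']
    rintro ⟨g, hg⟩ hgv
    have hgv' : Matrix.toLin' g v = 0 := by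
      simpa [hE] using hgv
    have hcomm : g * x = x * g := by
      have h1 : g * x - x * g = 0 := by
        simpa [had, LinearMap.mulRight_apply, LinearMap.mulLeft_apply] using hg
      exact sub_eq_zero.mp h1
    have hcommp : ∀ i : ℕ, g * x ^ i = x ^ i * g := fun i => Commute.pow_right hcomm i
    have h2 : ∀ i : ℕ, (f ^ i) = Matrix.toLin' (x ^ i) := by
      intro i
      induction i with
      | zero => rw [pow_zero, pow_zero, Matrix.toLin'_one]; rfl
      | succ i ih => rw [pow_succ, pow_succ, ih, hf, Matrix.toLin'_mul, Module.End.mul_eq_comp]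
    have key : ∀ i : ℕ, Matrix.toLin' g ((f ^ i) v) = 0 := by
      intro i
      rw [h2 i, Matrix.toLin'_apply, Matrix.toLin'_apply, Matrix.mulVec_mulVec, hcommp i,
        ← Matrix.mulVec_mulVec, show Matrix.mulVec g v = 0 from by
          rw [← Matrix.toLin'_apply]; exact hgv', Matrix.mulVec_zero]
    have hg0 : Matrix.toLin' g = 0 := by
      apply Module.Basis.ext b
      intro i
      have hbi : b i = (f ^ (i : ℕ)) v := by
        rw [hb, coe_basisOfLinearIndependentOfCardEqFinrank]
      rw [hbi, key (i : ℕ)]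
      simp
    have hgz : g = 0 := by
      have := Matrix.toLin'.injective (a₁ := g) (a₂ := 0) (by simpa using hg0)
      exact this
    exact (Submodule.mk_eq_zero _ hg).mpr hgz
  have hker_ad : Module.finrank ℂ (LinearMap.ker ad) ≤ n := by
    have h3 := LinearMap.finrank_le_finrank_of_injective hEinj
    rwa [hfinW] at h3
  have hrange_ad : n * n - n ≤ Module.finrank ℂ (LinearMap.range ad) := by
    have h1 := LinearMap.finrank_range_add_finrank_ker ad
    rw [hfinM] at h1
    omega
  have heq : LinearMap.range ad = LinearMap.ker L :=
    Submodule.eq_of_le_of_finrank_le hle (by rw [hkerL]; exact hrange_ad)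
  ext y
  simp only [Set.mem_setOf_eq]
  constructor
  · intro hy
    have hmem : y ∈ LinearMap.ker L := by
      rw [LinearMap.mem_ker]
      funext k
      have h4 := hy (k : ℕ) (by omega)
      simpa [hLdef, Matrix.traceLinearMap] using h4
    rw [← heq] at hmem
    obtain ⟨g, hg⟩ := hmem
    refine ⟨g, ?_⟩
    rw [← hg]
    simp [had]
  · rintro ⟨g, rfl⟩
    intro k hk
    have hmem : g * x - x * g ∈ LinearMap.ker L := by
      rw [← heq]
      exact ⟨g, by simp [had]⟩
    have h5 := congrFun (LinearMap.mem_ker.mp hmem) ⟨k, by omega⟩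
    simpa [hLdef, Matrix.traceLinearMap] using h5
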